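/- Let 1 → A → B → C → 1 be a short exact sequence of groups. For a group D, let rk D denote the supremum of the ranks of finitely generated abelian subgroups of D. Then rk B ≤ rk A + rk C. -/

import Mathlib

/-- `rk D` is the supremum of the ranks of finitely generated abelian subgroups of
`D`, equivalently the supremum of all `n` such that the free abelian group of rank
`n` embeds into `D`, as an extended natural number. -/
noncomputable def rk (D : Type*) [Group D] : ℕ∞ :=
  ⨆ (n : ℕ) (_ : ∃ φ : Multiplicative (Fin n → ℤ) →* D, Function.Injective φ),
    (n : ℕ∞)

lemma le_rk {D : Type*} [Group D] (n : ℕ)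
    (h : ∃ φ : Multiplicative (Fin n → ℤ) →* D, Function.Injective φ) :
    (n : ℕ∞) ≤ rk D :=
  le_iSup₂ (f := fun (n : ℕ) (_ : ∃ φ : Multiplicative (Fin n → ℤ) →* D,
    Function.Injective φ) => (n : ℕ∞)) n h

/-- For a short exact sequence `1 → A → B → C → 1`, one has `rk B ≤ rk A + rk C`. -/
theorem rk_le_of_short_exact (A B C : Type*) [Group A] [Group B] [Group C]
    (ι : A →* B) (π : B →* C)
    (hι : Function.Injective ι) (hπ : Function.Surjective π)
    (hexact : ι.range = π.ker) :
    rk B ≤ rk A + rk C := by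
  rw [rk]
  refine iSup₂_le fun n hn => ?_
  obtain ⟨φ, hφ⟩ := hn
  classical
  set M : Type := Fin n → ℤ with hM
  let ψ : Multiplicative M →* C := π.comp φ
  let ψa : M →+ Additive C := MonoidHom.toAdditiveRight ψ
  let K : Submodule ℤ M := AddSubgroup.toIntSubmodule ψa.ker
  have hKmem : ∀ x : M, x ∈ K ↔ π (φ (Multiplicative.ofAdd x)) = 1 := by
    intro x; rfl
  -- K is a finite free ℤ-module
  set k : ℕ := Module.finrank ℤ K with hk
  let bK := Module.finBasis ℤ K
  -- embedding ℤ^k into A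
  have hkA : (k : ℕ∞) ≤ rk A := by
    let g : (Fin k → ℤ) →+ M :=
      (K.subtype.comp (bK.equivFun.symm.toLinearMap)).toAddMonoidHom
    have hg : Function.Injective g := fun x y h => by
      exact bK.equivFun.symm.injective (Subtype.val_injective h)
    let χ : Multiplicative (Fin k → ℤ) →* B := φ.comp (AddMonoidHom.toMultiplicative g)
    have hχmem : ∀ x, χ x ∈ ι.range := by
      intro x
      rw [hexact, MonoidHom.mem_ker]
      have : (g x.toAdd : M) ∈ K := (bK.equivFun.symm x.toAdd).2
      exact (hKmem _).mp this
    let homA : Multiplicative (Fin k → ℤ) →* A :=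
      ((MonoidHom.ofInjective hι).symm.toMonoidHom).comp
        (χ.codRestrict ι.range hχmem)
    have : Function.Injective homA := by
      refine (MonoidHom.ofInjective hι).symm.injective.comp ?_
      intro x y hxy
      exact hφ.comp hg (Subtype.ext_iff.mp hxy)
    exact le_rk k ⟨homA, this⟩
  -- the quotient
  let Q := M ⧸ K
  let θa : Q →+ Additive C :=
    QuotientAddGroup.lift K.toAddSubgroup ψa (fun x hx => hx)
  have hθa : Function.Injective θa := by
    intro x y hab
    obtain ⟨a, rfl⟩ := Submodule.Quotient.mk_surjective _ x
    obtain ⟨b, rfl⟩ := Submodule.Quotient.mk_surjective _ y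
    have h1 : θa (Submodule.Quotient.mk a) = ψa a := rfl
    have h2 : θa (Submodule.Quotient.mk b) = ψa b := rfl
    rw [h1, h2] at hab
    rw [Submodule.Quotient.eq]
    show ψa (a - b) ∈ (⊥ : AddSubgroup (Additive C))
    rw [map_sub, hab, sub_self]
    exact rfl
  obtain ⟨m, I, fI, p, hp, e, ⟨hQ⟩⟩ := Module.equiv_free_prod_directSum (R := ℤ) (M := Q)
  -- embedding ℤ^m into C
  have hmC : (m : ℕ∞) ≤ rk C := by
    let g : (Fin m → ℤ) →+ Q :=
      (hQ.symm.toLinearMap.comp ((LinearMap.inl ℤ (Fin m →₀ ℤ) _).comp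
        (Finsupp.linearEquivFunOnFinite ℤ ℤ (Fin m)).symm.toLinearMap)).toAddMonoidHom
    have hg : Function.Injective g := fun x y h => by
      have h' := hQ.symm.injective h
      have h'' := congrArg Prod.fst h'
      exact (Finsupp.linearEquivFunOnFinite ℤ ℤ (Fin m)).symm.injective h''
    let homC : Multiplicative (Fin m → ℤ) →* C :=
      (MonoidHom.toAdditiveRight.symm θa).comp (AddMonoidHom.toMultiplicative g)
    have : Function.Injective homC := hθa.comp hg
    exact le_rk m ⟨homC, this⟩
  -- rank counting : n = m + k
  have hrankM : Module.rank ℤ M = n := rank_fin_fun n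
  have hrank : (n : Cardinal) = Module.rank ℤ Q + Module.rank ℤ K := by
    rw [Submodule.rank_quotient_add_rank K, hrankM]
  have hrkK : Module.rank ℤ K = k := (Module.finrank_eq_rank ℤ K).symm
  have hT : Module.rank ℤ (DirectSum I fun i => ℤ ⧸ Submodule.span ℤ {p i ^ e i}) = 0 := by
    rw [rank_eq_zero_iff]
    intro x
    refine ⟨∏ j, p j ^ e j,
      Finset.prod_ne_zero_iff.mpr (fun j _ => pow_ne_zero _ (hp j).ne_zero), ?_⟩
    refine DFinsupp.ext fun i => ?_
    rw [DFinsupp.smul_apply, DFinsupp.zero_apply]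
    have hxi : (p i ^ e i) • (x i) = 0 := by
      obtain ⟨a, ha⟩ := Submodule.Quotient.mk_surjective _ (x i)
      rw [← ha, ← Submodule.Quotient.mk_smul, Submodule.Quotient.mk_eq_zero]
      exact Submodule.mem_span_singleton.mpr ⟨a, by rw [smul_eq_mul, smul_eq_mul, mul_comm]⟩
    calc (∏ j, p j ^ e j) • x i
        = ((∏ j ∈ Finset.univ.erase i, p j ^ e j) * p i ^ e i) • x i := by
          rw [Finset.prod_erase_mul _ _ (Finset.mem_univ i)]
      _ = (∏ j ∈ Finset.univ.erase i, p j ^ e j) • ((p i ^ e i) • x i) := mul_smul _ _ _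
      _ = 0 := by rw [hxi, smul_zero]
  have hrkQ : Module.rank ℤ Q = m := by
    set T := DirectSum I fun i => ℤ ⧸ Submodule.span ℤ {p i ^ e i} with hTdef
    let f := LinearMap.fst ℤ (Fin m →₀ ℤ) T
    have h1 := Submodule.rank_quotient_add_rank (LinearMap.ker f)
    have h2 : Module.rank ℤ (((Fin m →₀ ℤ) × T) ⧸ LinearMap.ker f) = m := by
      rw [(LinearMap.quotKerEquivRange f).rank_eq,
        LinearMap.range_eq_top.mpr LinearMap.fst_surjective, rank_top, rank_finsupp_self]
      simp
    have h3 : Module.rank ℤ (LinearMap.ker f) = 0 := by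
      have : LinearMap.ker f = LinearMap.range (LinearMap.inr ℤ (Fin m →₀ ℤ) T) :=
        LinearMap.ker_fst _ _ _
      rw [this, ← (LinearEquiv.ofInjective _ (LinearMap.inr_injective
        (M := Fin m →₀ ℤ) (M₂ := T))).rank_eq, hT]
    rw [hQ.rank_eq, ← h1, h2, h3, add_zero]
  have hnmk : n = m + k := by
    have h := hrank
    rw [hrkQ, hrkK] at h
    exact_mod_cast h
  calc (n : ℕ∞) = (m : ℕ∞) + (k : ℕ∞) := by exact_mod_cast congrArg Nat.cast hnmk
    _ ≤ rk C + rk A := add_le_add hmC hkA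
    _ = rk A + rk C := add_comm _ _
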